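/- Let H, V be a Hilbert space and a closed subspace, and let a(·,·) be a bounded sesquilinear form on H such that a(u,v) + α(u,v)_{L²} is coercive on H for some α > 0 (Gårding inequality), with the embedding used in (u,v)_{L²} compact. Suppose w ∈ H and w_N ∈ V satisfy the Galerkin orthogonality a(w − w_N, v) = 0 for all v ∈ V, and suppose the duality estimate ‖w − w_N‖_{L²} ≤ ε_N ‖w − w_N‖_H holds with ε_N → 0. Then for ε_N small enough, ‖w − w_N‖_H ≤ C ‖w − Π w‖_H, where Π is any projection of H onto V and C is independent of N. -/
import Mathlib


open Filter

/-- Abstract Céa-type quasi-optimality under a Gårding inequality and an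
Aubin–Nitsche duality estimate. -/
theorem stmt_7
    {H : Type*} [NormedAddCommGroup H] [InnerProductSpace ℂ H] [CompleteSpace H]
    (a : H → H → ℂ)
    (haddl : ∀ u v z, a (u + v) z = a u z + a v z)
    (haddr : ∀ u v z, a u (v + z) = a u v + a u z)
    (hsmull : ∀ (t : ℂ) (u z : H), a (t • u) z = t * a u z)
    (hsmulr : ∀ (t : ℂ) (u z : H), a u (t • z) = (starRingEnd ℂ) t * a u z)
    (M : ℝ) (hM : 0 < M)
    (nL : H → ℝ) (hnL0 : ∀ u, 0 ≤ nL u)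
    -- boundedness of the sesquilinear form
    (hbdd : ∀ u v, ‖a u v‖ ≤ M * ‖u‖ * ‖v‖)
    -- Gårding inequality: a(u,u) + α‖u‖²_L is coercive, the L-norm being
    -- the one of the compact embedding
    (α β : ℝ) (hα : 0 < α) (hβ : 0 < β)
    (hgarding : ∀ u, β * ‖u‖ ^ 2 ≤ ‖a u u + (α * nL u ^ 2 : ℝ)‖)
    (hcompact : ∀ u, nL u ≤ ‖u‖)
    -- the Galerkin spaces, solutions and projections
    (V : ℕ → Submodule ℂ H) (w : H) (wN : ℕ → H) (hwN : ∀ N, wN N ∈ V N)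
    (hGalerkin : ∀ N, ∀ v ∈ V N, a (w - wN N) v = 0)
    (ε : ℕ → ℝ) (hε0 : ∀ N, 0 ≤ ε N) (hε : Tendsto ε atTop (nhds 0))
    (hduality : ∀ N, nL (w - wN N) ≤ ε N * ‖w - wN N‖)
    (P : ℕ → H →ₗ[ℂ] H)
    (hPrange : ∀ N x, P N x ∈ V N) (hPproj : ∀ N, ∀ v ∈ V N, P N v = v) :
    ∃ C > 0, ∃ N₀ : ℕ, ∀ N ≥ N₀, ‖w - wN N‖ ≤ C * ‖w - P N w‖ := by
  -- subtraction in the second argument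
  have hsubr : ∀ u x y, a u (x - y) = a u x - a u y := by
    intro u x y
    have h1 : a u (-y) = - a u y := by
      have := hsmulr (-1 : ℂ) u y
      simpa using this
    rw [sub_eq_add_neg, haddr, h1, ← sub_eq_add_neg]
  refine ⟨2 * M / β, by positivity, ?_⟩
  -- choose N₀ with α * (ε N)^2 ≤ β / 2
  have htend : Tendsto (fun N => α * ε N ^ 2) atTop (nhds 0) := by
    have : Tendsto (fun N => α * ε N ^ 2) atTop (nhds (α * (0 : ℝ) ^ 2)) := by
      exact (hε.pow 2).const_mul α
    simpa using this
  have hev : ∀ᶠ N in atTop, α * ε N ^ 2 < β / 2 :=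
    htend.eventually_lt_const (by positivity)
  obtain ⟨N₀, hN₀⟩ := eventually_atTop.mp hev
  refine ⟨N₀, fun N hN => ?_⟩
  set e := w - wN N with he
  -- Gårding + duality: (β/2) ‖e‖² ≤ ‖a e e‖
  have hdual : nL e ≤ ε N * ‖e‖ := hduality N
  have h1 : β * ‖e‖ ^ 2 ≤ ‖a e e‖ + α * nL e ^ 2 := by
    calc β * ‖e‖ ^ 2 ≤ ‖a e e + (α * nL e ^ 2 : ℝ)‖ := hgarding e
      _ ≤ ‖a e e‖ + ‖((α * nL e ^ 2 : ℝ) : ℂ)‖ := norm_add_le _ _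
      _ = ‖a e e‖ + α * nL e ^ 2 := by
          rw [Complex.norm_real, Real.norm_of_nonneg (by positivity)]
  have h2 : α * nL e ^ 2 ≤ (β / 2) * ‖e‖ ^ 2 := by
    have : nL e ^ 2 ≤ (ε N * ‖e‖) ^ 2 := by
      apply pow_le_pow_left₀ (hnL0 e) hdual
    calc α * nL e ^ 2 ≤ α * (ε N * ‖e‖) ^ 2 := by nlinarith
      _ = (α * ε N ^ 2) * ‖e‖ ^ 2 := by ring
      _ ≤ (β / 2) * ‖e‖ ^ 2 := by
          have := (hN₀ N hN).le
          nlinarith [sq_nonneg ‖e‖]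
  have h3 : (β / 2) * ‖e‖ ^ 2 ≤ ‖a e e‖ := by nlinarith
  -- Galerkin orthogonality: a e e = a e (w - P N w)
  have hmem : P N w - wN N ∈ V N := (V N).sub_mem (hPrange N w) (hwN N)
  have h4 : a e e = a e (w - P N w) := by
    have : a e e - a e (w - P N w) = a e (P N w - wN N) := by
      rw [← hsubr]
      congr 1
      simp only [he]
      abel
    have h0 : a e (P N w - wN N) = 0 := hGalerkin N _ hmem
    linear_combination this + h0
  have h5 : ‖a e e‖ ≤ M * ‖e‖ * ‖w - P N w‖ := h4 ▸ hbdd e (w - P N w)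
  -- conclude
  rcases eq_or_lt_of_le (norm_nonneg e) with h0 | h0
  · rw [← h0]; positivity
  · have : (β / 2) * ‖e‖ ≤ M * ‖w - P N w‖ := by
      have := le_trans h3 h5
      nlinarith
    rw [div_mul_eq_mul_div, le_div_iff₀ hβ]
    nlinarith
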